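/- Let A be a real symmetric matrix of order n, and let G₋(A) be the simple graph on vertex set {1,…,n} in which i ≠ j are adjacent if and only if a_ij < 0. Then: (i) A is copositive if and only if for every vertex set α of a connected component of G₋(A), the principal submatrix A[α] is copositive; (ii) A is SPN if and only if for every vertex set α of a connected component of G₋(A), the principal submatrix A[α] is SPN. -/

import Mathlib

open Matrix

/-- A real symmetric matrix `A` is *copositive* if `xᵀAx ≥ 0` for every
entrywise nonnegative vector `x`. -/
def Copositive {ι : Type*} [Fintype ι] (A : Matrix ι ι ℝ) : Prop :=
  ∀ x : ι → ℝ, (∀ i, 0 ≤ x i) → 0 ≤ x ⬝ᵥ A.mulVec x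

/-- A real symmetric matrix is *SPN* if it is the sum of a positive semidefinite
matrix and a symmetric entrywise nonnegative matrix. -/
def IsSPN {ι : Type*} [Fintype ι] (A : Matrix ι ι ℝ) : Prop :=
  ∃ P N : Matrix ι ι ℝ, P.PosSemidef ∧ N.IsSymm ∧ (∀ i j, 0 ≤ N i j) ∧ A = P + N

/-- The graph `G₋(A)`: `i ≠ j` are adjacent iff `A i j < 0`. -/
def negGraph {ι : Type*} (A : Matrix ι ι ℝ) : SimpleGraph ι where
  Adj i j := i ≠ j ∧ (A i j < 0 ∨ A j i < 0)
  symm := by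
    constructor
    intro i j h
    exact ⟨h.1.symm, h.2.symm⟩
  loopless := by
    constructor
    intro i h
    exact h.1 rfl

open scoped Classical

section Helpers
variable {ι κ : Type*} [Fintype ι] [Fintype κ]

lemma quadForm_eq (B : Matrix ι ι ℝ) (x : ι → ℝ) :
    x ⬝ᵥ B.mulVec x = ∑ i, ∑ j, x i * B i j * x j := by
  simp [dotProduct, mulVec, Finset.mul_sum, mul_assoc]

lemma sum_subtype_ite (p : ι → Prop) (g : ι → ℝ) :
    ∑ i : {i // p i}, g i.1 = ∑ i, if p i then g i else 0 := by
  rw [← Finset.sum_filter]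
  exact (Finset.sum_subtype _ (by simp) g).symm

lemma sum_subtype_of_zero (p : ι → Prop) (F : ι → ℝ) (h0 : ∀ i, ¬ p i → F i = 0) :
    ∑ i, F i = ∑ i : {i // p i}, F i.1 := by
  rw [sum_subtype_ite]
  refine Finset.sum_congr rfl fun i _ => ?_
  by_cases h : p i <;> simp [h, h0 i]

lemma double_sum_decomp (f : ι → κ) (g : ι → ι → ℝ) :
    ∑ i, ∑ j, g i j =
      (∑ c : κ, ∑ i : {i // f i = c}, ∑ j : {j // f j = c}, g i.1 j.1) +
      ∑ i, ∑ j, (if f j = f i then 0 else g i j) := by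
  have h1 : (∑ c : κ, ∑ i : {i // f i = c}, ∑ j : {j // f j = c}, g i.1 j.1)
      = ∑ i, ∑ j, (if f j = f i then g i j else 0) := by
    have : ∀ c : κ, (∑ i : {i // f i = c}, ∑ j : {j // f j = c}, g i.1 j.1)
        = ∑ i, if f i = c then (∑ j, if f j = c then g i j else 0) else 0 := by
      intro c
      rw [← sum_subtype_ite (fun i => f i = c) (fun i => ∑ j, if f j = c then g i j else 0)]
      exact Finset.sum_congr rfl fun i _ => sum_subtype_ite _ _
    simp_rw [this]
    rw [Finset.sum_comm]
    refine Finset.sum_congr rfl fun i _ => ?_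
    rw [Finset.sum_ite_eq (Finset.univ : Finset κ) (f i)
      (fun c => ∑ j, if f j = c then g i j else 0)]
    simp
  rw [h1, ← Finset.sum_add_distrib]
  refine Finset.sum_congr rfl fun i _ => ?_
  rw [← Finset.sum_add_distrib]
  refine Finset.sum_congr rfl fun j _ => ?_
  by_cases h : f j = f i <;> simp [h]

end Helpers

open scoped Classical in
/-- A symmetric real matrix `A` is copositive (resp. SPN) iff for every
vertex set `α` of a connected component of `G₋(A)` the principal submatrix `A[α]`
is copositive (resp. SPN). -/
theorem copositive_and_isSPN_iff_negGraph_components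
    (n : ℕ) (A : Matrix (Fin n) (Fin n) ℝ) (hA : A.IsSymm) :
    (Copositive A ↔ ∀ c : (negGraph A).ConnectedComponent,
      Copositive (A.submatrix
        (fun i : {i : Fin n // (negGraph A).connectedComponentMk i = c} => i.val)
        (fun i : {i : Fin n // (negGraph A).connectedComponentMk i = c} => i.val))) ∧
    (IsSPN A ↔ ∀ c : (negGraph A).ConnectedComponent,
      IsSPN (A.submatrix
        (fun i : {i : Fin n // (negGraph A).connectedComponentMk i = c} => i.val)
        (fun i : {i : Fin n // (negGraph A).connectedComponentMk i = c} => i.val))) := by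
  set G := negGraph A with hG
  set f : Fin n → G.ConnectedComponent := G.connectedComponentMk with hf
  have hAsymm : ∀ i j, A j i = A i j := by
    intro i j
    have := congrFun (congrFun hA j) i
    rw [Matrix.transpose_apply] at this
    exact this.symm
  have hcross : ∀ i j : Fin n, f i ≠ f j → 0 ≤ A i j := by
    intro i j hne
    by_contra h'
    push_neg at h'
    have hij : i ≠ j := fun e => hne (e ▸ rfl)
    exact hne (SimpleGraph.ConnectedComponent.connectedComponentMk_eq_of_adj ⟨hij, Or.inl h'⟩)
  refine ⟨⟨?_, ?_⟩, ⟨?_, ?_⟩⟩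
  · -- copositive forward
    intro hcop c x hx
    set y : Fin n → ℝ := fun i => if h : f i = c then x ⟨i, h⟩ else 0 with hy
    have hy0 : ∀ i, f i ≠ c → y i = 0 := by
      intro i h; simp [hy, h]
    have hynn : ∀ i, 0 ≤ y i := by
      intro i
      by_cases h : f i = c
      · simp only [hy, dif_pos h]; exact hx _
      · simp [hy, h]
    have key := hcop y hynn
    rw [quadForm_eq] at key
    rw [quadForm_eq]
    simp only [submatrix_apply]
    have e1 : ∑ i, ∑ j, y i * A i j * y j
        = ∑ i : {i // f i = c}, ∑ j : {j // f j = c}, x i * A i.1 j.1 * x j := by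
      rw [sum_subtype_of_zero (fun i => f i = c) _
        (fun i h => by simp [hy0 i h])]
      refine Finset.sum_congr rfl fun i _ => ?_
      rw [sum_subtype_of_zero (fun j => f j = c) _
        (fun j h => by simp [hy0 j h])]
      refine Finset.sum_congr rfl fun j _ => ?_
      have : ∀ k : {i // f i = c}, y k.1 = x k := by
        intro k; simp [hy, k.2]
      rw [this i, this j]
    rw [e1] at key
    exact key
  · -- copositive backward
    intro h x hx
    rw [quadForm_eq, double_sum_decomp f (fun i j => x i * A i j * x j)]
    apply add_nonneg
    · apply Finset.sum_nonneg
      intro c _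
      have := h c (fun i => x i.1) (fun i => hx i.1)
      rw [quadForm_eq] at this
      simpa only [submatrix_apply] using this
    · apply Finset.sum_nonneg; intro i _
      apply Finset.sum_nonneg; intro j _
      by_cases hc : f j = f i
      · simp [hc]
      · rw [if_neg hc]
        exact mul_nonneg (mul_nonneg (hx i) (hcross i j (fun e => hc e.symm))) (hx j)
  · -- SPN forward
    rintro ⟨P, N, hP, hN, hNn, hPN⟩ c
    refine ⟨P.submatrix Subtype.val Subtype.val, N.submatrix Subtype.val Subtype.val,
      hP.submatrix Subtype.val, hN.submatrix Subtype.val,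
      fun i j => hNn i.1 j.1, ?_⟩
    rw [hPN]
    ext i j
    simp [Matrix.submatrix_apply]
  · -- SPN backward
    intro h
    choose P N hP hN hNn hPN using h
    set Pext : G.ConnectedComponent → Matrix (Fin n) (Fin n) ℝ :=
      fun c i j => if h : f i = c ∧ f j = c then P c ⟨i, h.1⟩ ⟨j, h.2⟩ else 0 with hPext
    set Next : G.ConnectedComponent → Matrix (Fin n) (Fin n) ℝ :=
      fun c i j => if h : f i = c ∧ f j = c then N c ⟨i, h.1⟩ ⟨j, h.2⟩ else 0 with hNext
    have hPext0 : ∀ c i j, ¬ (f i = c ∧ f j = c) → Pext c i j = 0 := by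
      intro c i j h; simp [hPext, dif_neg h]
    have hPextPSD : ∀ c, (Pext c).PosSemidef := by
      intro c
      refine Matrix.posSemidef_iff_dotProduct_mulVec.mpr ⟨?_, ?_⟩
      · ext i j
        simp only [conjTranspose_apply, star_trivial]
        by_cases hij : f i = c ∧ f j = c
        · rw [hPext]
          simp only [dif_pos hij, dif_pos (And.intro hij.2 hij.1)]
          exact (hP c).1.apply _ _
        · rw [hPext0 c j i (fun e => hij ⟨e.2, e.1⟩), hPext0 c i j hij]
      · intro x
        simp only [star_trivial]
        have e1 : x ⬝ᵥ (Pext c).mulVec x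
            = (fun i : {i // f i = c} => x i.1) ⬝ᵥ (P c).mulVec (fun i => x i.1) := by
          rw [quadForm_eq, quadForm_eq]
          rw [sum_subtype_of_zero (fun i => f i = c) _ (fun i hi => by
            apply Finset.sum_eq_zero; intro j _
            rw [hPext0 c i j (fun e => hi e.1)]; ring)]
          refine Finset.sum_congr rfl fun i _ => ?_
          rw [sum_subtype_of_zero (fun j => f j = c) _ (fun j hj => by
            rw [hPext0 c i.1 j (fun e => hj e.2)]; ring)]
          refine Finset.sum_congr rfl fun j _ => ?_
          rw [hPext]
          simp only [dif_pos (And.intro i.2 j.2)]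
        rw [e1]
        have := (hP c).dotProduct_mulVec_nonneg (fun i : {i // f i = c} => x i.1)
        simpa using this
    have hNext0 : ∀ c i j, ¬ (f i = c ∧ f j = c) → Next c i j = 0 := by
      intro c i j h; simp [hNext, dif_neg h]
    refine ⟨∑ c, Pext c, (fun i j => (∑ c, Next c i j) + (if f j = f i then 0 else A i j)),
      ?_, ?_, ?_, ?_⟩
    · exact Finset.sum_induction _ _ (fun _ _ => Matrix.PosSemidef.add)
        Matrix.PosSemidef.zero (fun c _ => hPextPSD c)
    · -- N symmetric
      show Matrix.IsSymm _
      ext i j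
      show (∑ c, Next c j i + if f i = f j then 0 else A j i)
        = (∑ c, Next c i j + if f j = f i then 0 else A i j)
      congr 1
      · refine Finset.sum_congr rfl fun c _ => ?_
        by_cases hij : f i = c ∧ f j = c
        · rw [hNext]
          simp only [dif_pos hij, dif_pos (And.intro hij.2 hij.1)]
          have := congrFun (congrFun (hN c) ⟨i, hij.1⟩) ⟨j, hij.2⟩
          simpa [Matrix.transpose_apply] using this
        · rw [hNext0 c j i (fun e => hij ⟨e.2, e.1⟩), hNext0 c i j hij]
      · by_cases hc : f i = f j
        · rw [if_pos hc, if_pos hc.symm]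
        · rw [if_neg hc, if_neg (fun e => hc e.symm), hAsymm i j]
    · -- N nonneg
      intro i j
      apply add_nonneg
      · apply Finset.sum_nonneg; intro c _
        by_cases hij : f i = c ∧ f j = c
        · rw [hNext]; simp only [dif_pos hij]
          exact hNn c _ _
        · rw [hNext0 c i j hij]
      · by_cases hc : f j = f i
        · rw [if_pos hc]
        · rw [if_neg hc]
          exact hcross i j (fun e => hc e.symm)
    · -- A = P + N
      ext i j
      show A i j = (∑ c, Pext c) i j + ((∑ c, Next c i j) + (if f j = f i then 0 else A i j))
      rw [Matrix.sum_apply]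
      by_cases hc : f i = f j
      · have hsumP : ∑ c, Pext c i j = P (f i) ⟨i, rfl⟩ ⟨j, hc.symm⟩ := by
          rw [Finset.sum_eq_single (f i)
            (fun c _ hne => hPext0 c i j (fun e => hne (e.1 ▸ rfl)))
            (fun habs => absurd (Finset.mem_univ _) habs)]
          exact dif_pos ⟨rfl, hc.symm⟩
        have hsumN : ∑ c, Next c i j = N (f i) ⟨i, rfl⟩ ⟨j, hc.symm⟩ := by
          rw [Finset.sum_eq_single (f i)
            (fun c _ hne => hNext0 c i j (fun e => hne (e.1 ▸ rfl)))
            (fun habs => absurd (Finset.mem_univ _) habs)]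
          exact dif_pos ⟨rfl, hc.symm⟩
        rw [hsumP, hsumN, if_pos hc.symm, add_zero]
        have := congrFun (congrFun (hPN (f i)) ⟨i, rfl⟩) ⟨j, hc.symm⟩
        simpa using this
      · have hsumP : ∑ c, Pext c i j = 0 :=
          Finset.sum_eq_zero fun c _ => hPext0 c i j (fun e => hc (e.1.trans e.2.symm))
        have hsumN : ∑ c, Next c i j = 0 :=
          Finset.sum_eq_zero fun c _ => hNext0 c i j (fun e => hc (e.1.trans e.2.symm))
        rw [hsumP, hsumN, if_neg (fun e => hc e.symm)]
        ring
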